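/- The function s : ℝ → [-∞, 0], s(x) = sup_{n≥1} (1/n) log ℙ(X̄ₙ ≥ x), is concave: for all x, y ∈ ℝ and α ∈ [0,1], s(αx + (1-α)y) ≥ αs(x) + (1-α)s(y) (with the convention that the right side is -∞ if either term is -∞). -/

import Mathlib

open MeasureTheory ProbabilityTheory Filter Topology

/-- Empirical mean of the first `n` variables. -/
noncomputable def empMean {Ω : Type*} (X : ℕ → Ω → ℝ) (n : ℕ) (ω : Ω) : ℝ :=
  (∑ i ∈ Finset.range n, X i ω) / n

/-- The entropy `s(x) = sup_{n ≥ 1} (1/n) log ℙ(X̄ₙ ≥ x)`, with values in `[-∞, 0]`. -/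
noncomputable def entropy {Ω : Type*} [MeasurableSpace Ω] (μ : Measure Ω)
    (X : ℕ → Ω → ℝ) (x : ℝ) : EReal :=
  ⨆ n : ℕ, ⨆ _ : 1 ≤ n, (((n : ℝ)⁻¹ : ℝ) : EReal) *
    ENNReal.log (μ {ω | x ≤ empMean X n ω})

/-- The pressure `p(λ) = log 𝔼(e^{λ X₁})`, with values in `(-∞, ∞]`. -/
noncomputable def pressure {Ω : Type*} [MeasurableSpace Ω] (μ : Measure Ω)
    (X : ℕ → Ω → ℝ) (l : ℝ) : EReal :=
  ENNReal.log (∫⁻ ω, ENNReal.ofReal (Real.exp (l * X 0 ω)) ∂μ)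

namespace EntropyConcaveAux

variable {Ω : Type*} [MeasurableSpace Ω]

/-- `Q μ X n c = μ {S_n ≥ c}` where `S_n` is the sum of the first `n` variables. -/
noncomputable def Q (μ : Measure Ω) (X : ℕ → Ω → ℝ) (n : ℕ) (c : ℝ) : ENNReal :=
  μ {ω | c ≤ ∑ i ∈ Finset.range n, X i ω}

/-- `A μ X n x = (1/n) log μ {S_n ≥ n x}`. -/
noncomputable def A (μ : Measure Ω) (X : ℕ → Ω → ℝ) (n : ℕ) (x : ℝ) : EReal :=
  (((n : ℝ)⁻¹ : ℝ) : EReal) * ENNReal.log (Q μ X n ((n : ℝ) * x))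

variable {μ : Measure Ω} {X : ℕ → Ω → ℝ}

lemma measurable_sumRange (hmeas : ∀ i, Measurable (X i)) (n : ℕ) :
    Measurable (fun ω => ∑ i ∈ Finset.range n, X i ω) :=
  Finset.measurable_sum _ fun i _ => hmeas i

lemma measurable_sumShift (hmeas : ∀ i, Measurable (X i)) (m n : ℕ) :
    Measurable (fun ω => ∑ i ∈ Finset.range m, X (n + i) ω) :=
  Finset.measurable_sum _ fun i _ => hmeas (n + i)

/-- rewrite entropy in terms of `A`. -/
lemma entropy_eq (x : ℝ) :
    entropy μ X x = ⨆ n : ℕ, ⨆ _ : 1 ≤ n, A μ X n x := by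
  unfold entropy A Q
  refine iSup_congr fun n => ?_
  by_cases hn : 1 ≤ n
  · rw [iSup_pos hn, iSup_pos hn]
    have hset : {ω | x ≤ empMean X n ω} = {ω | (n : ℝ) * x ≤ ∑ i ∈ Finset.range n, X i ω} := by
      ext ω
      simp only [Set.mem_setOf_eq, empMean]
      rw [le_div_iff₀ (by exact_mod_cast hn : (0:ℝ) < n)]
      constructor <;> intro h <;> linarith
    rw [hset]
  · rw [iSup_neg hn, iSup_neg hn]

lemma indepFun_sums (hmeas : ∀ i, Measurable (X i))
    (hindep : iIndepFun X μ) (n m : ℕ) :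
    IndepFun (fun ω => ∑ i ∈ Finset.range n, X i ω)
      (fun ω => ∑ i ∈ Finset.range m, X (n + i) ω) μ := by
  classical
  set T : Finset ℕ := (Finset.range m).map ⟨fun i => n + i, fun a b h => by
    simpa using h⟩ with hT
  have hdisj : Disjoint (Finset.range n) T := by
    rw [Finset.disjoint_left]
    intro a ha haT
    simp only [hT, Finset.mem_map, Finset.mem_range, Function.Embedding.coeFn_mk] at haT
    simp only [Finset.mem_range] at ha
    obtain ⟨b, hb, hba⟩ := haT
    have hba' : n + b = a := hba
    omega
  have h := hindep.indepFun_finset (Finset.range n) T hdisj hmeas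
  have h2 := h.comp (φ := fun v : ↥(Finset.range n) → ℝ => ∑ i, v i)
    (ψ := fun v : ↥T → ℝ => ∑ i, v i)
    (Finset.measurable_sum _ fun i _ => measurable_pi_apply i)
    (Finset.measurable_sum _ fun i _ => measurable_pi_apply i)
  have e1 : ((fun v : ↥(Finset.range n) → ℝ => ∑ i, v i) ∘
      (fun ω (i : ↥(Finset.range n)) => X i ω))
      = fun ω => ∑ i ∈ Finset.range n, X i ω := by
    funext ω
    simp only [Function.comp_apply]
    exact Finset.sum_coe_sort (Finset.range n) (fun i => X i ω)
  have e2 : ((fun v : ↥T → ℝ => ∑ i, v i) ∘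
      (fun ω (i : ↥T) => X i ω))
      = fun ω => ∑ i ∈ Finset.range m, X (n + i) ω := by
    funext ω
    simp only [Function.comp_apply]
    rw [Finset.sum_coe_sort T (fun i => X i ω), hT, Finset.sum_map]
    rfl
  rwa [e1, e2] at h2

/-- The law of a block sum does not depend on where the block starts. -/
lemma map_blockSum (hmeas : ∀ i, Measurable (X i))
    (hindep : iIndepFun X μ)
    (hident : ∀ i, IdentDistrib (X i) (X 0) μ μ) [IsProbabilityMeasure μ] (m : ℕ) : ∀ n : ℕ,
    μ.map (fun ω => ∑ i ∈ Finset.range m, X (n + i) ω)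
      = μ.map (fun ω => ∑ i ∈ Finset.range m, X i ω) := by
  induction m with
  | zero => intro n; simp
  | succ m ih =>
    intro n
    have key : ∀ k : ℕ, μ.map (fun ω => ∑ i ∈ Finset.range (m+1), X (k + i) ω)
        = Measure.map (fun p : ℝ × ℝ => p.1 + p.2)
          ((μ.map (fun ω => ∑ i ∈ Finset.range m, X (k + i) ω)).prod (μ.map (X (k + m)))) := by
      intro k
      have hU : Measurable (fun ω => ∑ i ∈ Finset.range m, X (k + i) ω) :=
        measurable_sumShift hmeas m k
      have hV : Measurable (X (k + m)) := hmeas _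
      have hInd : IndepFun (fun ω => ∑ i ∈ Finset.range m, X (k + i) ω) (X (k + m)) μ := by
        classical
        set T : Finset ℕ := (Finset.range m).map ⟨fun i => k + i, fun a b h => by
          simpa using h⟩ with hT
        have hnot : k + m ∉ T := by
          simp only [hT, Finset.mem_map, Finset.mem_range, Function.Embedding.coeFn_mk]
          rintro ⟨a, ha, hak⟩; have hak' : k + a = k + m := hak; omega
        have h := hindep.indepFun_finsetSum_of_notMem hmeas hnot
        have e : ∀ ω, (∑ j ∈ T, X j) ω = ∑ i ∈ Finset.range m, X (k + i) ω := by
          intro ω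
          rw [Finset.sum_apply, hT, Finset.sum_map]
          rfl
        have e' : (∑ j ∈ T, X j) = fun ω => ∑ i ∈ Finset.range m, X (k + i) ω := funext e
        rwa [e'] at h
      have hprod := (indepFun_iff_map_prod_eq_prod_map_map hU.aemeasurable
        hV.aemeasurable).1 hInd
      have : (fun ω => ∑ i ∈ Finset.range (m+1), X (k + i) ω)
          = (fun p : ℝ × ℝ => p.1 + p.2) ∘
            (fun ω => ((∑ i ∈ Finset.range m, X (k + i) ω), X (k + m) ω)) := by
        funext ω
        simp [Finset.sum_range_succ]
      rw [this, ← Measure.map_map measurable_add (hU.prodMk hV), hprod]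
    rw [key n, ih n]
    have h0 : μ.map (fun ω => ∑ i ∈ Finset.range (m+1), X i ω)
        = μ.map (fun ω => ∑ i ∈ Finset.range (m+1), X (0 + i) ω) := by
      simp only [Nat.zero_add]
    rw [h0, key 0]
    congr 2
    · simp only [Nat.zero_add]
    · exact (hident (n + m)).map_eq.trans ((hident (0 + m)).map_eq).symm

lemma Q_shift (hmeas : ∀ i, Measurable (X i))
    (hindep : iIndepFun X μ)
    (hident : ∀ i, IdentDistrib (X i) (X 0) μ μ) [IsProbabilityMeasure μ] (m n : ℕ) (c : ℝ) :
    μ {ω | c ≤ ∑ i ∈ Finset.range m, X (n + i) ω} = Q μ X m c := by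
  have h1 : {ω | c ≤ ∑ i ∈ Finset.range m, X (n + i) ω}
      = (fun ω => ∑ i ∈ Finset.range m, X (n + i) ω) ⁻¹' Set.Ici c := rfl
  have h2 : {ω | c ≤ ∑ i ∈ Finset.range m, X i ω}
      = (fun ω => ∑ i ∈ Finset.range m, X i ω) ⁻¹' Set.Ici c := rfl
  rw [Q, h1, h2,
    ← Measure.map_apply (measurable_sumShift hmeas m n) measurableSet_Ici,
    ← Measure.map_apply (measurable_sumRange hmeas m) measurableSet_Ici,
    map_blockSum hmeas hindep hident m n]

/-- Superadditivity of the tail probabilities. -/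
lemma Q_superadd (hmeas : ∀ i, Measurable (X i))
    (hindep : iIndepFun X μ)
    (hident : ∀ i, IdentDistrib (X i) (X 0) μ μ) [IsProbabilityMeasure μ] (n m : ℕ) (c d : ℝ) :
    Q μ X n c * Q μ X m d ≤ Q μ X (n + m) (c + d) := by
  have hInd := indepFun_sums hmeas hindep n m
  have hmul := hInd.measure_inter_preimage_eq_mul (Set.Ici c) (Set.Ici d)
    measurableSet_Ici measurableSet_Ici
  have hsub : ((fun ω => ∑ i ∈ Finset.range n, X i ω) ⁻¹' Set.Ici c)
      ∩ ((fun ω => ∑ i ∈ Finset.range m, X (n + i) ω) ⁻¹' Set.Ici d)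
      ⊆ {ω | c + d ≤ ∑ i ∈ Finset.range (n + m), X i ω} := by
    rintro ω ⟨h1, h2⟩
    simp only [Set.mem_preimage, Set.mem_Ici] at h1 h2
    simp only [Set.mem_setOf_eq]
    rw [Finset.sum_range_add]
    exact add_le_add h1 h2
  calc Q μ X n c * Q μ X m d
      = μ (((fun ω => ∑ i ∈ Finset.range n, X i ω) ⁻¹' Set.Ici c)
        ∩ ((fun ω => ∑ i ∈ Finset.range m, X (n + i) ω) ⁻¹' Set.Ici d)) := by
        rw [hmul]
        congr 1
        exact (Q_shift hmeas hindep hident m n d).symm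
    _ ≤ Q μ X (n + m) (c + d) := measure_mono hsub

lemma Q_le_one [IsProbabilityMeasure μ] (n : ℕ) (c : ℝ) : Q μ X n c ≤ 1 :=
  prob_le_one

lemma A_nonpos [IsProbabilityMeasure μ] (n : ℕ) (x : ℝ) : A μ X n x ≤ 0 := by
  apply mul_nonpos_of_nonneg_of_nonpos
  · exact_mod_cast inv_nonneg.2 (Nat.cast_nonneg n)
  · rw [ENNReal.log_le_zero_iff]
    exact Q_le_one n _

lemma entropy_nonpos [IsProbabilityMeasure μ] (x : ℝ) : entropy μ X x ≤ 0 := by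
  rw [entropy_eq]
  exact iSup_le fun n => iSup_le fun _ => A_nonpos n x

lemma A_le_entropy (n : ℕ) (hn : 1 ≤ n) (x : ℝ) : A μ X n x ≤ entropy μ X x := by
  rw [entropy_eq]
  exact le_iSup_of_le n (le_iSup_of_le hn le_rfl)

/-- The key superadditivity inequality at the level of `A`. -/
lemma A_key (hmeas : ∀ i, Measurable (X i))
    (hindep : iIndepFun X μ)
    (hident : ∀ i, IdentDistrib (X i) (X 0) μ μ) [IsProbabilityMeasure μ]
    {n m : ℕ} (hn : 1 ≤ n) (hm : 1 ≤ m) {x y z : ℝ}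
    (hz : ((n + m : ℕ) : ℝ) * z ≤ (n : ℝ) * x + (m : ℝ) * y) :
    (((n : ℝ) / ((n : ℝ) + m) : ℝ) : EReal) * A μ X n x
      + (((m : ℝ) / ((n : ℝ) + m) : ℝ) : EReal) * A μ X m y
      ≤ A μ X (n + m) z := by
  have hnpos : (0:ℝ) < n := by exact_mod_cast hn
  have hmpos : (0:ℝ) < m := by exact_mod_cast hm
  have hNpos : (0:ℝ) < (n:ℝ) + m := by linarith
  set a := Q μ X n ((n : ℝ) * x) with ha
  set b := Q μ X m ((m : ℝ) * y) with hb
  by_cases ha0 : a = 0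
  · have : A μ X n x = ⊥ := by
      rw [A, ← ha, ha0, ENNReal.log_zero]
      exact EReal.coe_mul_bot_of_pos (by positivity)
    rw [this, EReal.coe_mul_bot_of_pos (div_pos hnpos hNpos), EReal.bot_add]
    exact bot_le
  by_cases hb0 : b = 0
  · have : A μ X m y = ⊥ := by
      rw [A, ← hb, hb0, ENNReal.log_zero]
      exact EReal.coe_mul_bot_of_pos (by positivity)
    rw [this, EReal.coe_mul_bot_of_pos (div_pos hmpos hNpos), EReal.add_bot]
    exact bot_le
  -- main case
  have hQab : a * b ≤ Q μ X (n + m) (((n + m : ℕ) : ℝ) * z) := by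
    refine le_trans (Q_superadd hmeas hindep hident n m _ _) ?_
    rw [Q, Q]
    apply measure_mono
    intro ω hω
    simp only [Set.mem_setOf_eq] at hω ⊢
    exact le_trans hz hω
  have hab0 : a * b ≠ 0 := mul_ne_zero ha0 hb0
  have hQ0 : Q μ X (n + m) (((n + m : ℕ) : ℝ) * z) ≠ 0 := by
    intro h
    rw [h] at hQab
    exact hab0 (le_antisymm hQab zero_le)
  -- logs
  have hlog : ENNReal.log a + ENNReal.log b
      ≤ ENNReal.log (Q μ X (n + m) (((n + m : ℕ) : ℝ) * z)) := by
    rw [← ENNReal.log_mul_add]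
    exact ENNReal.log_monotone hQab
  set La : EReal := ENNReal.log a with hLa
  set Lb : EReal := ENNReal.log b with hLb
  set LQ : EReal := ENNReal.log (Q μ X (n + m) (((n + m : ℕ) : ℝ) * z)) with hLQ
  have haT : a ≠ ⊤ := (lt_of_le_of_lt (Q_le_one n _) ENNReal.one_lt_top).ne
  have hbT : b ≠ ⊤ := (lt_of_le_of_lt (Q_le_one m _) ENNReal.one_lt_top).ne
  have hQT : Q μ X (n + m) (((n + m : ℕ) : ℝ) * z) ≠ ⊤ :=
    (lt_of_le_of_lt (Q_le_one _ _) ENNReal.one_lt_top).ne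
  have hLa_bot : La ≠ ⊥ := by rw [hLa]; simpa using ha0
  have hLa_top : La ≠ ⊤ := by rw [hLa]; simpa using haT
  have hLb_bot : Lb ≠ ⊥ := by rw [hLb]; simpa using hb0
  have hLb_top : Lb ≠ ⊤ := by rw [hLb]; simpa using hbT
  have hLQ_bot : LQ ≠ ⊥ := by rw [hLQ]; simpa using hQ0
  have hLQ_top : LQ ≠ ⊤ := by rw [hLQ]; simpa using hQT
  obtain ⟨la, hla⟩ : ∃ la : ℝ, (la : EReal) = La := ⟨La.toReal, EReal.coe_toReal hLa_top hLa_bot⟩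
  obtain ⟨lb, hlb⟩ : ∃ lb : ℝ, (lb : EReal) = Lb := ⟨Lb.toReal, EReal.coe_toReal hLb_top hLb_bot⟩
  obtain ⟨lq, hlq⟩ : ∃ lq : ℝ, (lq : EReal) = LQ := ⟨LQ.toReal, EReal.coe_toReal hLQ_top hLQ_bot⟩
  have hlog' : la + lb ≤ lq := by
    rw [← hla, ← hlb, ← hlq] at hlog
    exact_mod_cast hlog
  have hAn : A μ X n x = (((n : ℝ)⁻¹ * la : ℝ) : EReal) := by
    rw [A, ← ha, ← hLa, ← hla]
    norm_cast
  have hAm : A μ X m y = (((m : ℝ)⁻¹ * lb : ℝ) : EReal) := by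
    rw [A, ← hb, ← hLb, ← hlb]
    norm_cast
  have hAN : A μ X (n + m) z = ((((n : ℝ) + m)⁻¹ * lq : ℝ) : EReal) := by
    rw [A, ← hLQ, ← hlq]
    push_cast
    norm_cast
  rw [hAn, hAm, hAN]
  have goal_real : (n : ℝ) / ((n : ℝ) + m) * ((n : ℝ)⁻¹ * la)
      + (m : ℝ) / ((n : ℝ) + m) * ((m : ℝ)⁻¹ * lb) ≤ ((n : ℝ) + m)⁻¹ * lq := by
    have e1 : (n : ℝ) / ((n : ℝ) + m) * ((n : ℝ)⁻¹ * la)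
        + (m : ℝ) / ((n : ℝ) + m) * ((m : ℝ)⁻¹ * lb) = (la + lb) / ((n : ℝ) + m) := by
      field_simp
    rw [e1, inv_mul_eq_div]
    gcongr
  exact_mod_cast goal_real

/-- `A` increases along multiples. -/
lemma A_multiple (hmeas : ∀ i, Measurable (X i))
    (hindep : iIndepFun X μ)
    (hident : ∀ i, IdentDistrib (X i) (X 0) μ μ) [IsProbabilityMeasure μ]
    {n : ℕ} (hn : 1 ≤ n) (x : ℝ) : ∀ k : ℕ, 1 ≤ k → A μ X n x ≤ A μ X (k * n) x := by
  intro k hk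
  induction k with
  | zero => omega
  | succ k ih =>
    by_cases hk1 : 1 ≤ k
    · have ih' := ih hk1
      have hkn : 1 ≤ k * n := Nat.one_le_iff_ne_zero.2 (by positivity)
      have hkey := A_key hmeas hindep hident (n := k * n) (m := n) hkn hn
        (x := x) (y := x) (z := x) (by push_cast; ring_nf; rfl)
      have hcast : ((k * n : ℕ) : ℝ) = (k : ℝ) * n := by push_cast; ring
      set c1 : ℝ := ((k * n : ℕ) : ℝ) / (((k * n : ℕ) : ℝ) + n) with hc1
      set c2 : ℝ := (n : ℝ) / (((k * n : ℕ) : ℝ) + n) with hc2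
      have hnpos : (0:ℝ) < n := by exact_mod_cast hn
      have hknpos : (0:ℝ) < ((k * n : ℕ) : ℝ) := by exact_mod_cast hkn
      have hc1pos : 0 < c1 := by rw [hc1]; positivity
      have hc2pos : 0 < c2 := by rw [hc2]; positivity
      have hsum : c1 + c2 = 1 := by
        rw [hc1, hc2]
        field_simp
      calc A μ X n x = ((1:ℝ) : EReal) * A μ X n x := by
            rw [EReal.coe_one, one_mul]
        _ = ((c1 : EReal) + (c2 : EReal)) * A μ X n x := by
            rw [← EReal.coe_add, hsum]
        _ = (c1 : EReal) * A μ X n x + (c2 : EReal) * A μ X n x := by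
            exact EReal.right_distrib_of_nonneg (by exact_mod_cast hc1pos.le)
              (by exact_mod_cast hc2pos.le)
        _ ≤ (c1 : EReal) * A μ X (k * n) x + (c2 : EReal) * A μ X n x := by
            have hc1' : (0 : EReal) ≤ (c1 : EReal) := by
              rw [← EReal.coe_zero]; exact_mod_cast hc1pos.le
            exact add_le_add_left (mul_le_mul_of_nonneg_left ih' hc1') _
        _ ≤ A μ X (k * n + n) x := hkey
        _ = A μ X ((k + 1) * n) x := by rw [Nat.succ_mul]
    · have hk0 : k = 0 := by omega
      subst hk0
      simp

/-- Conclusion of an `ε`-approximation argument in `EReal`. -/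
lemma le_of_forall_eps {c : ℝ} {e : EReal}
    (h : ∀ ε : ℝ, 0 < ε → ((c - ε : ℝ) : EReal) ≤ e) : (c : EReal) ≤ e := by
  by_contra hcon
  push_neg at hcon
  induction e using EReal.rec with
  | bot =>
    have := h 1 one_pos
    exact (EReal.coe_ne_bot _) (le_bot_iff.1 this)
  | coe d =>
    have hdc : d < c := by exact_mod_cast hcon
    have := h ((c - d) / 2) (by linarith)
    rw [EReal.coe_le_coe_iff] at this
    linarith
  | top => exact (not_lt.2 le_top) hcon

set_option maxHeartbeats 1000000 in
/-- The main estimate: the case `0 < α < 1`, `y ≤ x`, both entropies finite. -/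
lemma main_ineq (hmeas : ∀ i, Measurable (X i))
    (hindep : iIndepFun X μ)
    (hident : ∀ i, IdentDistrib (X i) (X 0) μ μ) [IsProbabilityMeasure μ]
    {x y α : ℝ} (hxy : y ≤ x) (h0 : 0 < α) (h1 : α < 1)
    {Sx Sy : ℝ} (hSx : entropy μ X x = (Sx : EReal)) (hSy : entropy μ X y = (Sy : EReal)) :
    ((α * Sx + (1 - α) * Sy : ℝ) : EReal) ≤ entropy μ X (α * x + (1 - α) * y) := by
  apply le_of_forall_eps
  intro ε hε
  -- pick good indices for x and y
  have hx' : ((Sx - ε/4 : ℝ) : EReal) < entropy μ X x := by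
    rw [hSx]; exact_mod_cast (by linarith : Sx - ε/4 < Sx)
  rw [entropy_eq, lt_iSup_iff] at hx'
  obtain ⟨n₀, hx'⟩ := hx'
  rw [lt_iSup_iff] at hx'
  obtain ⟨hn₀, hAx⟩ := hx'
  have hy' : ((Sy - ε/4 : ℝ) : EReal) < entropy μ X y := by
    rw [hSy]; exact_mod_cast (by linarith : Sy - ε/4 < Sy)
  rw [entropy_eq, lt_iSup_iff] at hy'
  obtain ⟨m₀, hy'⟩ := hy'
  rw [lt_iSup_iff] at hy'
  obtain ⟨hm₀, hAy⟩ := hy'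
  -- the values are finite
  have hAxt : A μ X n₀ x ≠ ⊤ := ((A_nonpos n₀ x).trans_lt (by simp)).ne
  have hAxb : A μ X n₀ x ≠ ⊥ := ((EReal.bot_lt_coe _).trans hAx).ne'
  have hAyt : A μ X m₀ y ≠ ⊤ := ((A_nonpos m₀ y).trans_lt (by simp)).ne
  have hAyb : A μ X m₀ y ≠ ⊥ := ((EReal.bot_lt_coe _).trans hAy).ne'
  set Ax : ℝ := (A μ X n₀ x).toReal with hAxdef
  set Ay : ℝ := (A μ X m₀ y).toReal with hAydef
  have hAxeq : A μ X n₀ x = (Ax : EReal) := (EReal.coe_toReal hAxt hAxb).symm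
  have hAyeq : A μ X m₀ y = (Ay : EReal) := (EReal.coe_toReal hAyt hAyb).symm
  have hAxlb : Sx - ε/4 < Ax := by rw [hAxeq] at hAx; exact_mod_cast hAx
  have hAylb : Sy - ε/4 < Ay := by rw [hAyeq] at hAy; exact_mod_cast hAy
  have hAxub : Ax ≤ 0 := by
    have := A_nonpos (μ := μ) (X := X) n₀ x
    rw [hAxeq] at this; exact_mod_cast this
  have hAyub : Ay ≤ 0 := by
    have := A_nonpos (μ := μ) (X := X) m₀ y
    rw [hAyeq] at this; exact_mod_cast this
  -- rational approximation of α from above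
  set δ : ℝ := ε / (2 * (|Ax| + |Ay| + 1)) with hδdef
  have hδpos : 0 < δ := by
    rw [hδdef]
    positivity
  have hlt : α < min 1 (α + δ) := by
    rw [lt_min_iff]
    exact ⟨h1, by linarith⟩
  obtain ⟨r, hr1, hr2⟩ := exists_rat_btwn hlt
  have hr0 : (0 : ℝ) < (r : ℝ) := h0.trans hr1
  have hrlt1 : (r : ℝ) < 1 := hr2.trans_le (min_le_left _ _)
  have hrQ0 : 0 < r := by exact_mod_cast hr0
  have hrQ1 : r < 1 := by exact_mod_cast hrlt1
  set p : ℕ := r.num.toNat with hpdef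
  have hnum : (0 : ℤ) < r.num := Rat.num_pos.2 hrQ0
  have hppos : 0 < p := by rw [hpdef]; omega
  have hpnum : (p : ℤ) = r.num := by rw [hpdef]; omega
  have hrval : (r : ℝ) = (p : ℝ) / (r.den : ℝ) := by
    rw [show ((p : ℝ)) = ((r.num : ℤ) : ℝ) from by exact_mod_cast hpnum]
    rw [← Rat.cast_intCast, ← Rat.cast_natCast, ← Rat.cast_div, Rat.num_div_den]
  have hdenpos : 0 < r.den := r.pos
  have hplt : p < r.den := by
    by_contra hcon
    push_neg at hcon
    have : (1 : ℝ) ≤ (p : ℝ) / (r.den : ℝ) := by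
      rw [le_div_iff₀ (by exact_mod_cast hdenpos)]
      simpa using (by exact_mod_cast hcon : (r.den : ℝ) ≤ (p : ℝ))
    rw [← hrval] at this
    linarith
  set k : ℕ := r.den - p with hkdef
  have hkpos : 0 < k := by omega
  have hpk : p + k = r.den := by omega
  -- the indices
  set n : ℕ := p * (n₀ * m₀) with hndef
  set m : ℕ := k * (n₀ * m₀) with hmdef
  have hn1 : 1 ≤ n := Nat.one_le_iff_ne_zero.2 (by positivity)
  have hm1 : 1 ≤ m := Nat.one_le_iff_ne_zero.2 (by positivity)
  set w : ℝ := (n : ℝ) / ((n : ℝ) + (m : ℝ)) with hwdef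
  have hNpos : (0 : ℝ) < (n : ℝ) + (m : ℝ) := by
    have : (0:ℝ) < (n : ℝ) := by exact_mod_cast hn1
    have : (0:ℝ) < (m : ℝ) := by exact_mod_cast hm1
    linarith
  have hweq : w = (r : ℝ) := by
    rw [hwdef, hrval, hndef, hmdef]
    have hnm0 : (0:ℝ) < (n₀ : ℝ) * (m₀ : ℝ) := by
      have : (0:ℝ) < (n₀ : ℝ) := by exact_mod_cast hn₀
      have : (0:ℝ) < (m₀ : ℝ) := by exact_mod_cast hm₀
      positivity
    push_cast
    rw [← hpk]
    push_cast
    field_simp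
  have hw1 : 1 - w = (m : ℝ) / ((n : ℝ) + (m : ℝ)) := by
    rw [hwdef]
    field_simp
    ring
  have hwα : α < w := by rw [hweq]; exact hr1
  have hwδ : w < α + δ := by rw [hweq]; exact hr2.trans_le (min_le_right _ _)
  -- superadditivity
  set z : ℝ := α * x + (1 - α) * y with hzdef
  have hzle : ((n + m : ℕ) : ℝ) * z ≤ (n : ℝ) * x + (m : ℝ) * y := by
    have hkey : (n : ℝ) * x + (m : ℝ) * y = ((n : ℝ) + m) * (w * x + (1 - w) * y) := by
      rw [hw1, hwdef]
      field_simp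
    have hzw : z ≤ w * x + (1 - w) * y := by
      rw [hzdef]
      nlinarith [sub_nonneg.2 hxy, (hwα.le : α ≤ w)]
    push_cast
    rw [hkey]
    exact mul_le_mul_of_nonneg_left hzw hNpos.le
  have hkey := A_key hmeas hindep hident (n := n) (m := m) hn1 hm1 (x := x) (y := y) hzle
  -- monotonicity along multiples
  have hnx : A μ X n₀ x ≤ A μ X n x := by
    have : n = (p * m₀) * n₀ := by rw [hndef]; ring
    rw [this]
    exact A_multiple hmeas hindep hident hn₀ x (p * m₀)
      (Nat.one_le_iff_ne_zero.2 (by positivity))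
  have hmy : A μ X m₀ y ≤ A μ X m y := by
    have : m = (k * n₀) * m₀ := by rw [hmdef]; ring
    rw [this]
    exact A_multiple hmeas hindep hident hm₀ y (k * n₀)
      (Nat.one_le_iff_ne_zero.2 (by positivity))
  have hwpos : (0 : ℝ) < w := h0.trans hwα
  have hw1pos : (0 : ℝ) < 1 - w := by
    have : w < 1 := by rw [hweq]; exact hrlt1
    linarith
  have hwE : (0 : EReal) ≤ ((w : ℝ) : EReal) := by
    rw [← EReal.coe_zero]; exact_mod_cast hwpos.le
  have hw1E : (0 : EReal) ≤ ((1 - w : ℝ) : EReal) := by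
    rw [← EReal.coe_zero]; exact_mod_cast hw1pos.le
  have chain : ((w * Ax + (1 - w) * Ay : ℝ) : EReal) ≤ A μ X (n + m) z := by
    calc ((w * Ax + (1 - w) * Ay : ℝ) : EReal)
        = ((w : ℝ) : EReal) * ((Ax : ℝ) : EReal)
          + ((1 - w : ℝ) : EReal) * ((Ay : ℝ) : EReal) := by norm_cast
      _ ≤ ((w : ℝ) : EReal) * A μ X n x + ((1 - w : ℝ) : EReal) * A μ X m y := by
          apply add_le_add
          · exact mul_le_mul_of_nonneg_left (hAxeq ▸ hnx) hwE
          · exact mul_le_mul_of_nonneg_left (hAyeq ▸ hmy) hw1E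
      _ ≤ A μ X (n + m) z := by
          rw [hwdef] at *
          rw [hw1] at *
          exact hkey
  -- the real-number estimate
  have habsnn : (0:ℝ) ≤ |Ax| + |Ay| := by positivity
  have hreal : α * Sx + (1 - α) * Sy - ε ≤ w * Ax + (1 - w) * Ay := by
    have habs1 : -(|Ax| + |Ay|) ≤ Ax - Ay := by
      have h5 := neg_abs_le Ax
      have h6 := le_abs_self Ay
      linarith
    have hδw : w - α ≤ δ := by linarith
    have hwa : (0:ℝ) ≤ w - α := by linarith
    have t1 : (w - α) * (-(|Ax| + |Ay|)) ≤ (w - α) * (Ax - Ay) :=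
      mul_le_mul_of_nonneg_left habs1 hwa
    have t2 : (w - α) * (|Ax| + |Ay|) ≤ δ * (|Ax| + |Ay|) :=
      mul_le_mul_of_nonneg_right hδw habsnn
    have t3' : δ * (|Ax| + |Ay| + 1) = ε / 2 := by
      rw [hδdef]
      field_simp
    have t3 : δ * (|Ax| + |Ay|) ≤ ε / 2 := by nlinarith [hδpos]
    have h3 : -(ε/2) ≤ (w - α) * (Ax - Ay) := by nlinarith
    have hax : α * Sx - ε/4 ≤ α * Ax := by
      have h7 : α * (Sx - ε/4) ≤ α * Ax := mul_le_mul_of_nonneg_left hAxlb.le h0.le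
      nlinarith
    have hay : (1 - α) * Sy - ε/4 ≤ (1 - α) * Ay := by
      have h8 : (1 - α) * (Sy - ε/4) ≤ (1 - α) * Ay :=
        mul_le_mul_of_nonneg_left hAylb.le (by linarith)
      nlinarith
    nlinarith [h3, hax, hay]
  calc ((α * Sx + (1 - α) * Sy - ε : ℝ) : EReal)
      ≤ ((w * Ax + (1 - w) * Ay : ℝ) : EReal) := by exact_mod_cast hreal
    _ ≤ A μ X (n + m) z := chain
    _ ≤ entropy μ X z := A_le_entropy (n + m) (by omega) z

end EntropyConcaveAux

open EntropyConcaveAux in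
theorem entropy_concave {Ω : Type*} [MeasurableSpace Ω] (μ : Measure Ω) [IsProbabilityMeasure μ]
    (X : ℕ → Ω → ℝ) (hmeas : ∀ i, Measurable (X i))
    (hindep : iIndepFun X μ)
    (hident : ∀ i, IdentDistrib (X i) (X 0) μ μ)
    (x y α : ℝ) (hα : α ∈ Set.Icc (0 : ℝ) 1) :
    ((α : ℝ) : EReal) * entropy μ X x + ((1 - α : ℝ) : EReal) * entropy μ X y ≤
      entropy μ X (α * x + (1 - α) * y) := by
  obtain ⟨hα0, hα1⟩ := hα
  by_cases h0 : α = 0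
  · subst h0
    norm_num
  by_cases h1 : α = 1
  · subst h1
    norm_num
  have hα0' : 0 < α := lt_of_le_of_ne hα0 (Ne.symm h0)
  have hα1' : α < 1 := lt_of_le_of_ne hα1 h1
  by_cases hbx : entropy μ X x = ⊥
  · rw [hbx, EReal.coe_mul_bot_of_pos hα0', EReal.bot_add]
    exact bot_le
  by_cases hby : entropy μ X y = ⊥
  · rw [hby, EReal.coe_mul_bot_of_pos (by linarith : (0:ℝ) < 1 - α), EReal.add_bot]
    exact bot_le
  have htx : entropy μ X x ≠ ⊤ := ((entropy_nonpos x).trans_lt (by simp)).ne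
  have hty : entropy μ X y ≠ ⊤ := ((entropy_nonpos y).trans_lt (by simp)).ne
  set Sx : ℝ := (entropy μ X x).toReal with hSxdef
  set Sy : ℝ := (entropy μ X y).toReal with hSydef
  have hSx : entropy μ X x = (Sx : EReal) := (EReal.coe_toReal htx hbx).symm
  have hSy : entropy μ X y = (Sy : EReal) := (EReal.coe_toReal hty hby).symm
  rw [hSx, hSy]
  have hLHS : ((α : ℝ) : EReal) * ((Sx : ℝ) : EReal) + ((1 - α : ℝ) : EReal) * ((Sy : ℝ) : EReal)
      = ((α * Sx + (1 - α) * Sy : ℝ) : EReal) := by norm_cast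
  rw [hLHS]
  rcases le_total y x with hxy | hxy
  · exact main_ineq hmeas hindep hident hxy hα0' hα1' hSx hSy
  · have h := main_ineq hmeas hindep hident (x := y) (y := x) (α := 1 - α) hxy
      (by linarith) (by linarith) hSy hSx
    have e1 : (1 - α) * y + (1 - (1 - α)) * x = α * x + (1 - α) * y := by ring
    have e2 : (1 - α) * Sy + (1 - (1 - α)) * Sx = α * Sx + (1 - α) * Sy := by ring
    rw [e1, e2] at h
    exact h
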